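/- Let f(r) be a C² function on an interval with r > 0. The quantity (2 - r²·(d/dr)[r²·(d/dr)(f/r²)])/(12r²) vanishes identically if and only if f(r) = 1 + b₁r + b₂r² for some constants b₁, b₂. -/

import Mathlib

private lemma const_of_deriv0 {s : Set ℝ} (hso : IsOpen s) (hc : Convex ℝ s)
    (h : ℝ → ℝ) (hd : ∀ x ∈ s, HasDerivAt h 0 x) {x y : ℝ} (hx : x ∈ s) (hy : y ∈ s) :
    h x = h y := by
  refine hc.is_const_of_fderivWithin_eq_zero
    (fun z hz => (hd z hz).differentiableAt.differentiableWithinAt) (fun z hz => ?_) hx hy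
  rw [fderivWithin_of_isOpen hso hz, (hd z hz).hasFDerivAt.fderiv]
  ext; simp

theorem stmt_10 (a b : ℝ) (ha : 0 ≤ a) (hab : a < b) (f : ℝ → ℝ)
    (hf : ContDiffOn ℝ 2 f (Set.Ioo a b)) :
    (∀ r ∈ Set.Ioo a b,
      (2 - r^2 * deriv (fun r' => r'^2 * deriv (fun s => f s / s^2) r') r) / (12 * r^2) = 0)
    ↔ ∃ b₁ b₂ : ℝ, ∀ r ∈ Set.Ioo a b, f r = 1 + b₁*r + b₂*r^2 := by
  have hso : IsOpen (Set.Ioo a b) := isOpen_Ioo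
  have hcvx : Convex ℝ (Set.Ioo a b) := convex_Ioo a b
  have hpos : ∀ x ∈ Set.Ioo a b, 0 < x := fun x hx => lt_of_le_of_lt ha hx.1
  set g : ℝ → ℝ := fun t => f t / t^2 with hgdef
  set G : ℝ → ℝ := fun r' => r'^2 * deriv g r' with hGdef
  have x₀mem : (a+b)/2 ∈ Set.Ioo a b := ⟨by linarith, by linarith⟩
  constructor
  · intro H
    have hgcd : ContDiffOn ℝ 2 g (Set.Ioo a b) :=
      hf.div (contDiffOn_id.pow 2) (fun x hx => pow_ne_zero _ (hpos x hx).ne')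
    have hg1 : ContDiffOn ℝ 1 (deriv g) (Set.Ioo a b) :=
      hgcd.deriv_of_isOpen hso (by norm_num)
    have hGdiff : ∀ r ∈ Set.Ioo a b, DifferentiableAt ℝ G r := fun r hr =>
      ((differentiableAt_id.pow 2)).mul
        ((hg1.differentiableOn (by norm_num)).differentiableAt (hso.mem_nhds hr))
    have hG' : ∀ r ∈ Set.Ioo a b, deriv G r = 2 / r^2 := by
      intro r hr
      have hr0 : (0:ℝ) < r := hpos r hr
      have h1 := H r hr
      have h2 : (12 * r^2) ≠ 0 := by positivity
      rw [div_eq_zero_iff] at h1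
      rcases h1 with h1 | h1
      · field_simp
        linarith
      · exact absurd h1 h2
    -- h := G + 2/r is constant
    set h : ℝ → ℝ := fun r => G r + 2 * r⁻¹ with hhdef
    have hhd : ∀ r ∈ Set.Ioo a b, HasDerivAt h 0 r := by
      intro r hr
      have hr0 : (0:ℝ) < r := hpos r hr
      have d1 : HasDerivAt G (2 / r^2) r := hG' r hr ▸ (hGdiff r hr).hasDerivAt
      have d2 : HasDerivAt (fun r : ℝ => 2 * r⁻¹) (2 * (-(r^2)⁻¹)) r :=
        (hasDerivAt_inv hr0.ne').const_mul 2
      have := d1.add d2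
      rw [show (2 / r^2 + 2 * -(r^2)⁻¹ : ℝ) = 0 by ring] at this
      exact this
    set c₁ : ℝ := h ((a+b)/2) with hc₁
    have hGval : ∀ r ∈ Set.Ioo a b, deriv g r = (c₁ - 2 * r⁻¹) / r^2 := by
      intro r hr
      have hr0 : (0:ℝ) < r := hpos r hr
      have : h r = c₁ := const_of_deriv0 hso hcvx h hhd hr x₀mem
      have hG : G r = c₁ - 2 * r⁻¹ := by
        simp only [hhdef] at this; linarith
      have : r^2 * deriv g r = c₁ - 2 * r⁻¹ := hG
      field_simp at this ⊢
      linarith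
    -- k := g + c₁/r - 1/r² is constant
    set k : ℝ → ℝ := fun r => g r + c₁ * r⁻¹ - (r^2)⁻¹ with hkdef
    have hkd : ∀ r ∈ Set.Ioo a b, HasDerivAt k 0 r := by
      intro r hr
      have hr0 : (0:ℝ) < r := hpos r hr
      have dg : HasDerivAt g ((c₁ - 2 * r⁻¹) / r^2) r := by
        rw [← hGval r hr]
        exact ((hgcd.differentiableOn (by norm_num)).differentiableAt (hso.mem_nhds hr)).hasDerivAt
      have d2 : HasDerivAt (fun r : ℝ => c₁ * r⁻¹) (c₁ * (-(r^2)⁻¹)) r :=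
        (hasDerivAt_inv hr0.ne').const_mul c₁
      have d3 : HasDerivAt (fun r : ℝ => (r^2)⁻¹) (-(2 * r^(2-1)) / (r^2)^2) r :=
        (hasDerivAt_pow 2 r).inv (pow_ne_zero _ hr0.ne')
      have := (dg.add d2).sub d3
      rw [show ((c₁ - 2 * r⁻¹) / r ^ 2 + c₁ * -(r ^ 2)⁻¹ - -(2 * r ^ (2 - 1)) / (r ^ 2) ^ 2 : ℝ) = 0 by
        field_simp; ring] at this
      exact this
    set c₂ : ℝ := k ((a+b)/2) with hc₂
    refine ⟨-c₁, c₂, fun r hr => ?_⟩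
    have hr0 : (0:ℝ) < r := hpos r hr
    have hk : k r = c₂ := const_of_deriv0 hso hcvx k hkd hr x₀mem
    have hfr : f r / r^2 = c₂ - c₁ * r⁻¹ + (r^2)⁻¹ := by
      have : f r / r^2 + c₁ * r⁻¹ - (r^2)⁻¹ = c₂ := hk
      linarith
    rw [div_eq_iff (by positivity : (r:ℝ)^2 ≠ 0)] at hfr
    rw [hfr]; field_simp; ring
  · rintro ⟨b₁, b₂, hb⟩ r hr
    have hr0 : (0:ℝ) < r := hpos r hr
    have hderivg : ∀ x ∈ Set.Ioo a b, deriv g x = -2 * (x^3)⁻¹ - b₁ * (x^2)⁻¹ := by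
      intro x hx
      have hx0 : (0:ℝ) < x := hpos x hx
      have hE : g =ᶠ[nhds x] (fun t => (t^2)⁻¹ + b₁ * t⁻¹ + b₂) := by
        filter_upwards [hso.mem_nhds hx] with t ht
        have ht0 : (0:ℝ) < t := hpos t ht
        simp only [hgdef, hb t ht]
        field_simp
      rw [hE.deriv_eq]
      have d1 : HasDerivAt (fun t : ℝ => (t^2)⁻¹) (-(2 * x^(2-1)) / (x^2)^2) x :=
        (hasDerivAt_pow 2 x).inv (pow_ne_zero _ hx0.ne')
      have d2 : HasDerivAt (fun t : ℝ => b₁ * t⁻¹) (b₁ * (-(x^2)⁻¹)) x :=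
        (hasDerivAt_inv hx0.ne').const_mul b₁
      have := ((d1.add d2).add_const b₂).deriv
      rw [show deriv (fun t : ℝ => (t^2)⁻¹ + b₁ * t⁻¹ + b₂) x = _ from this]
      field_simp
      ring
    have hGE : G =ᶠ[nhds r] (fun x => -2 * x⁻¹ - b₁) := by
      filter_upwards [hso.mem_nhds hr] with x hx
      have hx0 : (0:ℝ) < x := hpos x hx
      simp only [hGdef, hderivg x hx]
      field_simp
    have hdG : deriv G r = 2 * (r^2)⁻¹ := by
      rw [hGE.deriv_eq]
      have : HasDerivAt (fun x : ℝ => -2 * x⁻¹ - b₁) (-2 * (-(r^2)⁻¹) - 0) r :=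
        ((hasDerivAt_inv hr0.ne').const_mul (-2)).sub (hasDerivAt_const r b₁)
      rw [this.deriv]
      ring
    rw [hdG]
    field_simp
    ring
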